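/- Let R = R(a_1,…,a_l) and R'' = R(a_1,…,a_l, a_{l+1},…,a_m) be nested top-l and top-m partial rankings in S_n (so R'' ⊆ R). Then for every σ ∈ R, the Kendall distances satisfy d(σ, Π_{R''}(σ)) = (n − m)(m − l) + C(m−l, 2) − d(A_R(σ), Π_{R''}(A_R(σ))). -/

import Mathlib

/-- The Kendall (tau) distance between two permutations of `Fin n`:
the number of pairs `(x, y)` with `x < y` on which `σ⁻¹` and `τ⁻¹`
disagree in relative order. -/
def kendallDist {n : ℕ} (σ τ : Equiv.Perm (Fin n)) : ℕ :=
  (Finset.univ.filter (fun p : Fin n × Fin n =>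
    p.1 < p.2 ∧ ¬((σ⁻¹ p.1 < σ⁻¹ p.2) ↔ (τ⁻¹ p.1 < τ⁻¹ p.2)))).card

/-- The top-`k` partial ranking determined by the items `a 0, …, a (k-1)`:
the set of full rankings (permutations) `σ` with `σ i = a i` for the first
`k` positions. -/
def topkFinset {n k : ℕ} (hk : k ≤ n) (a : Fin k → Fin n) :
    Finset (Equiv.Perm (Fin n)) :=
  Finset.univ.filter fun σ => ∀ i : Fin k, σ (Fin.castLE hk i) = a i

/-- The permutation of `Fin n` fixing the first `k` positions and reversing
the order of the remaining `n - k` positions. -/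
def revAfter (n k : ℕ) : Equiv.Perm (Fin n) :=
  Function.Involutive.toPerm
    (fun p => if _h : (p : ℕ) < k then p
      else ⟨n + k - 1 - (p : ℕ), by have := p.isLt; omega⟩)
    (by
      intro p
      have hp := p.isLt
      by_cases h : (p : ℕ) < k
      · simp [h]
      · have h2 : ¬ (n + k - 1 - (p : ℕ) < k) := by omega
        simp only [dif_neg h, dif_neg h2]
        ext
        simp
        omega)

/-- The antithetic permutation of `σ` relative to a top-`k` partial ranking:
the first `k` positions are unchanged and the remaining positions are
reversed, i.e. `A σ (k+j) = σ (n+1-j)` (in 1-indexed notation). -/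
def antithetic (n k : ℕ) (σ : Equiv.Perm (Fin n)) : Equiv.Perm (Fin n) :=
  σ * revAfter n k

open Finset


lemma choose_add_two (k d : ℕ) : (k + d).choose 2 = k.choose 2 + d * k + d.choose 2 := by
  induction d with
  | zero => simp
  | succ d ih =>
    have h1 : k + (d + 1) = (k + d) + 1 := by ring
    rw [h1, Nat.choose_succ_succ, Nat.choose_one_right, ih,
      Nat.choose_succ_succ d 1, Nat.choose_one_right, Nat.succ_mul,
      show Nat.succ 1 = 2 from rfl]
    omega

lemma kendall_symm {n : ℕ} (σ τ : Equiv.Perm (Fin n)) : kendallDist σ τ = kendallDist τ σ := by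
  unfold kendallDist
  congr 1
  ext p
  simp only [mem_filter]
  tauto

lemma topk_inv_apply {n k : ℕ} (hk : k ≤ n) (b : Fin k → Fin n) {ρ : Equiv.Perm (Fin n)}
    (hρ : ρ ∈ topkFinset hk b) (i : Fin k) : ρ⁻¹ (b i) = Fin.castLE hk i := by
  simp only [topkFinset, mem_filter, mem_univ, true_and] at hρ
  rw [← hρ i]
  simp

lemma topk_inv_ge {n k : ℕ} (hk : k ≤ n) (b : Fin k → Fin n) {ρ : Equiv.Perm (Fin n)}
    (hρ : ρ ∈ topkFinset hk b) {x : Fin n} (hx : ∀ i, b i ≠ x) : k ≤ ((ρ⁻¹ x : Fin n) : ℕ) := by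
  by_contra h
  push_neg at h
  simp only [topkFinset, mem_filter, mem_univ, true_and] at hρ
  apply hx ⟨((ρ⁻¹ x : Fin n) : ℕ), h⟩
  have h2 := hρ ⟨((ρ⁻¹ x : Fin n) : ℕ), h⟩
  have hc : Fin.castLE hk ⟨((ρ⁻¹ x : Fin n) : ℕ), h⟩ = ρ⁻¹ x := rfl
  rw [hc] at h2
  rw [← h2]
  simp

lemma card_posSet {n m : ℕ} (hm : m ≤ n) {a : Fin m → Fin n} (ha : Function.Injective a)
    (τ : Equiv.Perm (Fin n)) :
    ((Finset.univ.image a)ᶜ.image (fun x => (τ⁻¹ x : Fin n))).card = n - m := by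
  rw [Finset.card_image_of_injective _ (Equiv.injective _)]
  rw [Finset.card_compl, Finset.card_image_of_injective _ ha]
  simp

noncomputable def projFun {n m : ℕ} (hm : m ≤ n) (a : Fin m → Fin n)
    (ha : Function.Injective a) (τ : Equiv.Perm (Fin n)) : Fin n → Fin n :=
  fun p =>
    if h : (p : ℕ) < m then a ⟨p, h⟩
    else τ (((Finset.univ.image a)ᶜ.image (fun x => (τ⁻¹ x : Fin n))).orderIsoOfFin
      (card_posSet hm ha τ) ⟨(p : ℕ) - m, by have := p.isLt; omega⟩)

lemma projFun_notmem {n m : ℕ} (hm : m ≤ n) (a : Fin m → Fin n)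
    (ha : Function.Injective a) (τ : Equiv.Perm (Fin n)) {p : Fin n} (h : ¬ (p : ℕ) < m) :
    projFun hm a ha τ p ∉ Finset.univ.image a ∧
      τ⁻¹ (projFun hm a ha τ p) =
        (((Finset.univ.image a)ᶜ.image (fun x => (τ⁻¹ x : Fin n))).orderIsoOfFin
          (card_posSet hm ha τ) ⟨(p : ℕ) - m, by have := p.isLt; omega⟩ : Fin n) := by
  unfold projFun
  rw [dif_neg h]
  set e := ((Finset.univ.image a)ᶜ.image (fun x => (τ⁻¹ x : Fin n))).orderIsoOfFin
    (card_posSet hm ha τ) with he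
  have hmem : (e ⟨(p : ℕ) - m, by have := p.isLt; omega⟩ : Fin n)
      ∈ (Finset.univ.image a)ᶜ.image (fun x => (τ⁻¹ x : Fin n)) :=
    (e ⟨(p : ℕ) - m, by have := p.isLt; omega⟩).2
  simp only [Finset.mem_image, Finset.mem_compl] at hmem
  obtain ⟨y, hy, hy2⟩ := hmem
  constructor
  · rw [← hy2]
    simpa using hy
  · rw [← hy2]
    simp

lemma projFun_injective {n m : ℕ} (hm : m ≤ n) (a : Fin m → Fin n)
    (ha : Function.Injective a) (τ : Equiv.Perm (Fin n)) :
    Function.Injective (projFun hm a ha τ) := by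
  intro p q hpq
  by_cases hp : (p : ℕ) < m <;> by_cases hq : (q : ℕ) < m
  · unfold projFun at hpq
    rw [dif_pos hp, dif_pos hq] at hpq
    have h2 := ha hpq
    have h3 : (p : ℕ) = (q : ℕ) := congrArg (Fin.val : Fin m → ℕ) h2
    exact Fin.ext h3
  · exfalso
    have h1 := (projFun_notmem hm a ha τ hq).1
    rw [← hpq] at h1
    apply h1
    unfold projFun
    rw [dif_pos hp]
    exact Finset.mem_image_of_mem a (Finset.mem_univ _)
  · exfalso
    have h1 := (projFun_notmem hm a ha τ hp).1
    rw [hpq] at h1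
    apply h1
    unfold projFun
    rw [dif_pos hq]
    exact Finset.mem_image_of_mem a (Finset.mem_univ _)
  · have h1 := (projFun_notmem hm a ha τ hp).2
    have h2 := (projFun_notmem hm a ha τ hq).2
    rw [hpq] at h1
    rw [h1] at h2
    have h3 := Subtype.coe_injective h2
    have h4 := (OrderIso.injective _) h3
    have h5 : (p : ℕ) - m = (q : ℕ) - m := congrArg Fin.val h4
    exact Fin.ext (by omega)

noncomputable def proj {n m : ℕ} (hm : m ≤ n) (a : Fin m → Fin n)
    (ha : Function.Injective a) (τ : Equiv.Perm (Fin n)) : Equiv.Perm (Fin n) :=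
  Equiv.ofBijective _ ((Finite.injective_iff_bijective).mp (projFun_injective hm a ha τ))

lemma proj_apply {n m : ℕ} (hm : m ≤ n) (a : Fin m → Fin n)
    (ha : Function.Injective a) (τ : Equiv.Perm (Fin n)) (p : Fin n) :
    proj hm a ha τ p = projFun hm a ha τ p := rfl

lemma proj_mem {n m : ℕ} (hm : m ≤ n) (a : Fin m → Fin n)
    (ha : Function.Injective a) (τ : Equiv.Perm (Fin n)) :
    proj hm a ha τ ∈ topkFinset hm a := by
  simp only [topkFinset, mem_filter, mem_univ, true_and]
  intro i
  rw [proj_apply]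
  unfold projFun
  rw [dif_pos (by simpa using i.isLt)]
  exact congrArg a (Fin.ext rfl)

lemma notmem_forall {n m : ℕ} {a : Fin m → Fin n} {x : Fin n}
    (hx : x ∉ Finset.univ.image a) : ∀ i, a i ≠ x := by
  intro i h
  exact hx (by rw [← h]; exact Finset.mem_image_of_mem _ (Finset.mem_univ _))

lemma proj_inv_ge {n m : ℕ} (hm : m ≤ n) (a : Fin m → Fin n)
    (ha : Function.Injective a) (τ : Equiv.Perm (Fin n)) {x : Fin n}
    (hx : x ∉ Finset.univ.image a) : m ≤ (((proj hm a ha τ)⁻¹ x : Fin n) : ℕ) :=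
  topk_inv_ge hm a (proj_mem hm a ha τ) (notmem_forall hx)

lemma proj_inv_order {n m : ℕ} (hm : m ≤ n) (a : Fin m → Fin n)
    (ha : Function.Injective a) (τ : Equiv.Perm (Fin n)) {x y : Fin n}
    (hx : x ∉ Finset.univ.image a) (hy : y ∉ Finset.univ.image a) :
    ((proj hm a ha τ)⁻¹ x < (proj hm a ha τ)⁻¹ y) ↔ (τ⁻¹ x < τ⁻¹ y) := by
  set π := proj hm a ha τ with hπ
  have hpm : m ≤ ((π⁻¹ x : Fin n) : ℕ) := proj_inv_ge hm a ha τ hx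
  have hqm : m ≤ ((π⁻¹ y : Fin n) : ℕ) := proj_inv_ge hm a ha τ hy
  have hxp : projFun hm a ha τ (π⁻¹ x) = x := Equiv.apply_symm_apply π x
  have hyq : projFun hm a ha τ (π⁻¹ y) = y := Equiv.apply_symm_apply π y
  have h1 := (projFun_notmem hm a ha τ (p := π⁻¹ x) (by omega)).2
  have h2 := (projFun_notmem hm a ha τ (p := π⁻¹ y) (by omega)).2
  rw [hxp] at h1
  rw [hyq] at h2
  have key : ∀ (i j : Fin (n - m)),
      ((((Finset.univ.image a)ᶜ.image (fun x => (τ⁻¹ x : Fin n))).orderIsoOfFin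
        (card_posSet hm ha τ) i : Fin n) <
       (((Finset.univ.image a)ᶜ.image (fun x => (τ⁻¹ x : Fin n))).orderIsoOfFin
        (card_posSet hm ha τ) j : Fin n)) ↔ i < j := fun i j =>
    Iff.trans Subtype.coe_lt_coe (OrderIso.lt_iff_lt _)
  rw [h1, h2, key]
  simp only [Fin.mk_lt_mk, Fin.lt_def]
  clear h1 h2
  omega

lemma proj_min {n m : ℕ} (hm : m ≤ n) (a : Fin m → Fin n)
    (ha : Function.Injective a) (τ : Equiv.Perm (Fin n)) {ρ : Equiv.Perm (Fin n)}
    (hρ : ρ ∈ topkFinset hm a) :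
    kendallDist (proj hm a ha τ) τ ≤ kendallDist ρ τ := by
  unfold kendallDist
  apply Finset.card_le_card
  intro p hp
  simp only [mem_filter, mem_univ, true_and] at *
  obtain ⟨hlt, hdis⟩ := hp
  refine ⟨hlt, fun hiff => hdis ?_⟩
  by_cases h1 : p.1 ∈ Finset.univ.image a <;> by_cases h2 : p.2 ∈ Finset.univ.image a
  · simp only [Finset.mem_image] at h1 h2
    obtain ⟨i, -, hi⟩ := h1
    obtain ⟨j, -, hj⟩ := h2
    rw [← hiff, ← hi, ← hj, topk_inv_apply hm a (proj_mem hm a ha τ),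
      topk_inv_apply hm a hρ, topk_inv_apply hm a (proj_mem hm a ha τ),
      topk_inv_apply hm a hρ]
  · simp only [Finset.mem_image] at h1
    obtain ⟨i, -, hi⟩ := h1
    rw [← hiff]
    have e1 : (proj hm a ha τ)⁻¹ p.1 = Fin.castLE hm i := by
      rw [← hi, topk_inv_apply hm a (proj_mem hm a ha τ)]
    have e2 : ρ⁻¹ p.1 = Fin.castLE hm i := by
      rw [← hi, topk_inv_apply hm a hρ]
    have g1 := proj_inv_ge hm a ha τ h2
    have g2 := topk_inv_ge hm a hρ (notmem_forall h2)
    rw [e1, e2]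
    have hi := i.isLt
    have t1 : Fin.castLE hm i < (proj hm a ha τ)⁻¹ p.2 := by
      rw [Fin.lt_def]; simp only [Fin.coe_castLE]; omega
    have t2 : Fin.castLE hm i < ρ⁻¹ p.2 := by
      rw [Fin.lt_def]; simp only [Fin.coe_castLE]; omega
    exact iff_of_true t1 t2
  · simp only [Finset.mem_image] at h2
    obtain ⟨j, -, hj⟩ := h2
    rw [← hiff]
    have e1 : (proj hm a ha τ)⁻¹ p.2 = Fin.castLE hm j := by
      rw [← hj, topk_inv_apply hm a (proj_mem hm a ha τ)]
    have e2 : ρ⁻¹ p.2 = Fin.castLE hm j := by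
      rw [← hj, topk_inv_apply hm a hρ]
    have g1 := proj_inv_ge hm a ha τ h1
    have g2 := topk_inv_ge hm a hρ (notmem_forall h1)
    rw [e1, e2]
    have hj := j.isLt
    have t1 : ¬ (proj hm a ha τ)⁻¹ p.1 < Fin.castLE hm j := by
      rw [Fin.lt_def]; simp only [Fin.coe_castLE]; omega
    have t2 : ¬ ρ⁻¹ p.1 < Fin.castLE hm j := by
      rw [Fin.lt_def]; simp only [Fin.coe_castLE]; omega
    exact iff_of_false t1 t2
  · exact proj_inv_order hm a ha τ h1 h2

lemma revAfter_apply (n k : ℕ) (p : Fin n) :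
    revAfter n k p = if _h : (p : ℕ) < k then p
      else ⟨n + k - 1 - (p : ℕ), by have := p.isLt; omega⟩ := by
  unfold revAfter
  rfl

lemma revAfter_inv (n k : ℕ) : (revAfter n k)⁻¹ = revAfter n k := by
  show (revAfter n k).symm = revAfter n k
  unfold revAfter
  exact Function.Involutive.toPerm_symm _

lemma antithetic_inv_apply (n k : ℕ) (σ : Equiv.Perm (Fin n)) (x : Fin n) :
    (antithetic n k σ)⁻¹ x = revAfter n k (σ⁻¹ x) := by
  unfold antithetic
  rw [mul_inv_rev, Equiv.Perm.mul_apply, revAfter_inv]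

lemma antithetic_mem {n k : ℕ} (hk : k ≤ n) (b : Fin k → Fin n) {σ : Equiv.Perm (Fin n)}
    (hσ : σ ∈ topkFinset hk b) : antithetic n k σ ∈ topkFinset hk b := by
  simp only [topkFinset, mem_filter, mem_univ, true_and] at *
  intro i
  show σ (revAfter n k (Fin.castLE hk i)) = b i
  rw [revAfter_apply, dif_pos (by simpa using i.isLt)]
  exact hσ i

lemma proj_inv_a {n m : ℕ} (hm : m ≤ n) (a : Fin m → Fin n)
    (ha : Function.Injective a) (τ : Equiv.Perm (Fin n)) (i : Fin m) :
    (proj hm a ha τ)⁻¹ (a i) = Fin.castLE hm i :=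
  topk_inv_apply hm a (proj_mem hm a ha τ) i

lemma charlem {n l m : ℕ} (hlm : l ≤ m) (hm : m ≤ n) (a : Fin m → Fin n)
    (ha : Function.Injective a) (τ : Equiv.Perm (Fin n))
    (hτ : τ ∈ topkFinset (hlm.trans hm) (a ∘ Fin.castLE hlm)) (z : Fin n) :
    ((((proj hm a ha τ)⁻¹ z : Fin n) : ℕ) < l ↔ ((τ⁻¹ z : Fin n) : ℕ) < l) ∧
    ((((proj hm a ha τ)⁻¹ z : Fin n) : ℕ) < l →
      (((proj hm a ha τ)⁻¹ z : Fin n) : ℕ) = ((τ⁻¹ z : Fin n) : ℕ)) ∧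
    (z ∈ Finset.univ.image (a ∘ Fin.castLE hlm) ↔
      (((proj hm a ha τ)⁻¹ z : Fin n) : ℕ) < l) := by
  classical
  by_cases hz : z ∈ Finset.univ.image (a ∘ Fin.castLE hlm)
  · simp only [Finset.mem_image, mem_univ, true_and, Function.comp_apply] at hz
    obtain ⟨i, hi⟩ := hz
    have e1 : (proj hm a ha τ)⁻¹ z = Fin.castLE hm (Fin.castLE hlm i) := by
      rw [← hi, proj_inv_a]
    have e2 : τ⁻¹ z = Fin.castLE (hlm.trans hm) i := by
      rw [← hi]
      exact topk_inv_apply (hlm.trans hm) (a ∘ Fin.castLE hlm) hτ i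
    have hil := i.isLt
    rw [e1, e2]
    have v1 : ((Fin.castLE hm (Fin.castLE hlm i)) : ℕ) = (i : ℕ) := rfl
    have v2 : ((Fin.castLE (hlm.trans hm) i) : ℕ) = (i : ℕ) := rfl
    refine ⟨by omega, by omega, iff_of_true ?_ (by omega)⟩
    simp only [Finset.mem_image, mem_univ, true_and, Function.comp_apply]
    exact ⟨i, hi⟩
  · have hτge : l ≤ ((τ⁻¹ z : Fin n) : ℕ) :=
      topk_inv_ge (hlm.trans hm) (a ∘ Fin.castLE hlm) hτ (notmem_forall hz)
    have hπge : l ≤ (((proj hm a ha τ)⁻¹ z : Fin n) : ℕ) := by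
      by_cases hzS : z ∈ Finset.univ.image a
      · simp only [Finset.mem_image, mem_univ, true_and] at hzS
        obtain ⟨j, hj⟩ := hzS
        have e1 : (proj hm a ha τ)⁻¹ z = Fin.castLE hm j := by rw [← hj, proj_inv_a]
        rw [e1]
        have v1 : ((Fin.castLE hm j) : ℕ) = (j : ℕ) := rfl
        rw [v1]
        by_contra hlt
        push_neg at hlt
        apply hz
        simp only [Finset.mem_image, mem_univ, true_and, Function.comp_apply]
        refine ⟨⟨(j : ℕ), hlt⟩, ?_⟩
        rw [← hj]
        exact congrArg a (Fin.ext rfl)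
      · have := proj_inv_ge hm a ha τ hzS
        omega
    exact ⟨by omega, by omega, iff_of_false hz (by omega)⟩

lemma agree_char {n l m : ℕ} (hlm : l ≤ m) (hm : m ≤ n) (a : Fin m → Fin n)
    (ha : Function.Injective a) (τ : Equiv.Perm (Fin n))
    (hτ : τ ∈ topkFinset (hlm.trans hm) (a ∘ Fin.castLE hlm)) {x y : Fin n}
    (hS0 : x ∈ Finset.univ.image (a ∘ Fin.castLE hlm) ∨
      y ∈ Finset.univ.image (a ∘ Fin.castLE hlm)) :
    ((proj hm a ha τ)⁻¹ x < (proj hm a ha τ)⁻¹ y ↔ τ⁻¹ x < τ⁻¹ y) := by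
  obtain ⟨hx1, hx2, hx3⟩ := charlem hlm hm a ha τ hτ x
  obtain ⟨hy1, hy2, hy3⟩ := charlem hlm hm a ha τ hτ y
  rw [hx3] at hS0
  rw [hy3] at hS0
  rw [Fin.lt_def, Fin.lt_def]
  omega

lemma proj_order_indep {n m : ℕ} (hm : m ≤ n) (a : Fin m → Fin n)
    (ha : Function.Injective a) (τ τ' : Equiv.Perm (Fin n)) {x y : Fin n}
    (h : x ∈ Finset.univ.image a ∨ y ∈ Finset.univ.image a) :
    ((proj hm a ha τ)⁻¹ x < (proj hm a ha τ)⁻¹ y ↔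
      (proj hm a ha τ')⁻¹ x < (proj hm a ha τ')⁻¹ y) := by
  classical
  have key : ∀ z : Fin n,
      (z ∈ Finset.univ.image a →
        ((((proj hm a ha τ)⁻¹ z : Fin n) : ℕ) < m ∧
         (((proj hm a ha τ)⁻¹ z : Fin n) : ℕ) = (((proj hm a ha τ')⁻¹ z : Fin n) : ℕ))) ∧
      (z ∉ Finset.univ.image a →
        (m ≤ (((proj hm a ha τ)⁻¹ z : Fin n) : ℕ) ∧
         m ≤ (((proj hm a ha τ')⁻¹ z : Fin n) : ℕ))) := by
    intro z
    constructor
    · intro hz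
      simp only [Finset.mem_image, mem_univ, true_and] at hz
      obtain ⟨j, hj⟩ := hz
      have e1 : (proj hm a ha τ)⁻¹ z = Fin.castLE hm j := by rw [← hj, proj_inv_a]
      have e2 : (proj hm a ha τ')⁻¹ z = Fin.castLE hm j := by rw [← hj, proj_inv_a]
      rw [e1, e2]
      exact ⟨j.isLt, rfl⟩
    · intro hz
      exact ⟨proj_inv_ge hm a ha τ hz, proj_inv_ge hm a ha τ' hz⟩
  obtain ⟨kx1, kx2⟩ := key x
  obtain ⟨ky1, ky2⟩ := key y
  rw [Fin.lt_def, Fin.lt_def]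
  by_cases hx : x ∈ Finset.univ.image a <;> by_cases hy : y ∈ Finset.univ.image a
  · obtain ⟨_, e⟩ := kx1 hx; obtain ⟨_, e'⟩ := ky1 hy; omega
  · obtain ⟨h1, e⟩ := kx1 hx; obtain ⟨h2, h3⟩ := ky2 hy; omega
  · obtain ⟨h2, h3⟩ := kx2 hx; obtain ⟨h1, e⟩ := ky1 hy; omega
  · rcases h with h | h
    · exact absurd h hx
    · exact absurd h hy

lemma flip_order {n l m : ℕ} (hlm : l ≤ m) (hm : m ≤ n) (a : Fin m → Fin n)
    {σ : Equiv.Perm (Fin n)}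
    (hσ : σ ∈ topkFinset (hlm.trans hm) (a ∘ Fin.castLE hlm)) {x y : Fin n}
    (hxy : x ≠ y)
    (hx : x ∉ Finset.univ.image (a ∘ Fin.castLE hlm))
    (hy : y ∉ Finset.univ.image (a ∘ Fin.castLE hlm)) :
    (σ⁻¹ x < σ⁻¹ y ↔ ¬ ((antithetic n l σ)⁻¹ x < (antithetic n l σ)⁻¹ y)) := by
  have hgx : l ≤ ((σ⁻¹ x : Fin n) : ℕ) :=
    topk_inv_ge (hlm.trans hm) (a ∘ Fin.castLE hlm) hσ (notmem_forall hx)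
  have hgy : l ≤ ((σ⁻¹ y : Fin n) : ℕ) :=
    topk_inv_ge (hlm.trans hm) (a ∘ Fin.castLE hlm) hσ (notmem_forall hy)
  have hne : σ⁻¹ x ≠ σ⁻¹ y := fun h => hxy (by
    have := congrArg σ h
    simpa using this)
  have hne' : ((σ⁻¹ x : Fin n) : ℕ) ≠ ((σ⁻¹ y : Fin n) : ℕ) := fun h => hne (Fin.ext h)
  rw [antithetic_inv_apply, antithetic_inv_apply, revAfter_apply, revAfter_apply,
    dif_neg (by omega), dif_neg (by omega)]
  have hxlt := (σ⁻¹ x).isLt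
  have hylt := (σ⁻¹ y).isLt
  simp only [Fin.mk_lt_mk, Fin.lt_def]
  omega


lemma card_pairs_lt {n : ℕ} (U : Finset (Fin n)) :
    (univ.filter fun p : Fin n × Fin n => p.1 < p.2 ∧ p.1 ∈ U ∧ p.2 ∈ U).card
      = U.card.choose 2 := by
  classical
  set T := univ.filter fun p : Fin n × Fin n => p.1 < p.2 ∧ p.1 ∈ U ∧ p.2 ∈ U with hT
  set T' := univ.filter fun p : Fin n × Fin n => p.2 < p.1 ∧ p.1 ∈ U ∧ p.2 ∈ U with hT'
  have hTT' : T.card = T'.card := by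
    apply Finset.card_bij' (fun p (_ : p ∈ T) => (p.2, p.1)) (fun p (_ : p ∈ T') => (p.2, p.1))
    · intro p hp; simp only [hT, hT', mem_filter, mem_univ, true_and] at *; tauto
    · intro p hp; simp only [hT, hT', mem_filter, mem_univ, true_and] at *; tauto
    · intro p hp; rfl
    · intro p hp; rfl
  have h1 : (U ×ˢ U).filter (fun p : Fin n × Fin n => p.1 < p.2) = T := by
    ext p; simp [hT, Finset.mem_product]; tauto
  have h2 : ((U ×ˢ U).filter (fun p : Fin n × Fin n => ¬ p.1 < p.2)).filter
      (fun p => p.2 < p.1) = T' := by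
    ext p; simp [hT', Finset.mem_product]
    constructor
    · rintro ⟨⟨h, _⟩, h2⟩; exact ⟨h2, h⟩
    · rintro ⟨h2, h⟩; exact ⟨⟨h, h2.le⟩, h2⟩
  have h3 : ((U ×ˢ U).filter (fun p : Fin n × Fin n => ¬ p.1 < p.2)).filter
      (fun p => ¬ p.2 < p.1) = U.image (fun x => (x, x)) := by
    ext ⟨x, y⟩
    simp [Finset.mem_product]
    constructor
    · rintro ⟨⟨⟨hx, hy⟩, hle⟩, hle'⟩
      have hxy : x = y := le_antisymm hle' hle
      subst hxy
      exact ⟨hx, rfl⟩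
    · rintro ⟨hx, rfl⟩
      simp [hx]
  have hD : (U.image (fun x : Fin n => (x, x))).card = U.card :=
    Finset.card_image_of_injective _ (fun x y h => (Prod.ext_iff.mp h).1)
  have e1 := Finset.card_filter_add_card_filter_not
      (s := U ×ˢ U) (p := fun p : Fin n × Fin n => p.1 < p.2)
  have e2 := Finset.card_filter_add_card_filter_not
      (s := (U ×ˢ U).filter (fun p : Fin n × Fin n => ¬ p.1 < p.2))
      (p := fun p : Fin n × Fin n => p.2 < p.1)
  rw [h1] at e1
  rw [h2, h3, hD] at e2
  rw [Finset.card_product] at e1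
  have hmul : U.card * U.card = U.card * (U.card - 1) + U.card := by
    cases' hU : U.card with k
    · simp
    · simp only [Nat.succ_sub_one]; ring
  rw [Nat.choose_two_right]
  omega

set_option maxHeartbeats 2000000 in
lemma main_nat {n l m : ℕ} (hlm : l ≤ m) (hm : m ≤ n) (a : Fin m → Fin n)
    (ha : Function.Injective a) {σ : Equiv.Perm (Fin n)}
    (hσ : σ ∈ topkFinset (hlm.trans hm) (a ∘ Fin.castLE hlm)) :
    kendallDist (proj hm a ha σ) σ +
      kendallDist (proj hm a ha (antithetic n l σ)) (antithetic n l σ)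
      = (m - l) * (n - m) + (m - l).choose 2 := by
  have hAmem : antithetic n l σ ∈ topkFinset (hlm.trans hm) (a ∘ Fin.castLE hlm) :=
    antithetic_mem _ _ hσ
  set A := antithetic n l σ with hA
  unfold kendallDist
  set S := Finset.univ.image a with hS
  set S0 := Finset.univ.image (a ∘ Fin.castLE hlm) with hS0
  set Fσ := univ.filter (fun p : Fin n × Fin n => p.1 < p.2 ∧
    ¬(((proj hm a ha σ)⁻¹ p.1 < (proj hm a ha σ)⁻¹ p.2) ↔ (σ⁻¹ p.1 < σ⁻¹ p.2))) with hFσ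
  set FA := univ.filter (fun p : Fin n × Fin n => p.1 < p.2 ∧
    ¬(((proj hm a ha A)⁻¹ p.1 < (proj hm a ha A)⁻¹ p.2) ↔ (A⁻¹ p.1 < A⁻¹ p.2))) with hFA
  set P := univ.filter (fun p : Fin n × Fin n => p.1 < p.2 ∧
    (p.1 ∈ S ∨ p.2 ∈ S) ∧ p.1 ∉ S0 ∧ p.2 ∉ S0) with hP
  have hS0S : ∀ z : Fin n, z ∈ S0 → z ∈ S := by
    intro z hz
    simp only [hS0, hS, Finset.mem_image, mem_univ, true_and, Function.comp_apply] at *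
    obtain ⟨i, hi⟩ := hz
    exact ⟨Fin.castLE hlm i, hi⟩
  have hunion : Fσ ∪ FA = P := by
    ext p
    simp only [hFσ, hFA, hP, mem_union, mem_filter, mem_univ, true_and]
    by_cases hlt : p.1 < p.2
    swap
    · simp [hlt]
    simp only [hlt, true_and]
    by_cases hin0 : p.1 ∈ S0 ∨ p.2 ∈ S0
    · have g1 := agree_char hlm hm a ha σ hσ (x := p.1) (y := p.2) hin0
      have g2 := agree_char hlm hm a ha A hAmem (x := p.1) (y := p.2) hin0
      constructor
      · rintro (h | h)
        exacts [absurd g1 h, absurd g2 h]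
      · rintro ⟨-, h3, h4⟩
        rcases hin0 with h | h
        exacts [absurd h h3, absurd h h4]
    · push_neg at hin0
      by_cases hinS : p.1 ∈ S ∨ p.2 ∈ S
      · have hPP := proj_order_indep hm a ha σ A (x := p.1) (y := p.2) hinS
        have hflip := flip_order hlm hm a hσ (ne_of_lt hlt) hin0.1 hin0.2
        constructor
        · intro _
          exact ⟨hinS, hin0.1, hin0.2⟩
        · intro _
          tauto
      · push_neg at hinS
        have g1 := proj_inv_order hm a ha σ (x := p.1) (y := p.2) hinS.1 hinS.2
        have g2 := proj_inv_order hm a ha A (x := p.1) (y := p.2) hinS.1 hinS.2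
        constructor
        · rintro (h | h)
          exacts [absurd g1 h, absurd g2 h]
        · rintro ⟨h, -⟩
          tauto
  have hdisj : Disjoint Fσ FA := by
    rw [Finset.disjoint_left]
    intro p hpσ hpA
    have hp : p ∈ P := by
      rw [← hunion]
      exact mem_union_left _ hpσ
    simp only [hFσ, hFA, mem_filter, mem_univ, true_and] at hpσ hpA
    obtain ⟨hlt, hd1⟩ := hpσ
    obtain ⟨-, hd2⟩ := hpA
    simp only [hP, mem_filter, mem_univ, true_and] at hp
    obtain ⟨-, hinS, h01, h02⟩ := hp
    have hPP := proj_order_indep hm a ha σ A (x := p.1) (y := p.2) hinS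
    have hflip := flip_order hlm hm a hσ (ne_of_lt hlt) h01 h02
    tauto
  have hcard : Fσ.card + FA.card = P.card := by
    rw [← Finset.card_union_of_disjoint hdisj, hunion]
  rw [hcard]
  set T1 := univ.filter (fun p : Fin n × Fin n => p.1 < p.2 ∧ p.1 ∈ S0ᶜ ∧ p.2 ∈ S0ᶜ) with hT1d
  set T2 := univ.filter (fun p : Fin n × Fin n => p.1 < p.2 ∧ p.1 ∈ Sᶜ ∧ p.2 ∈ Sᶜ) with hT2d
  have hT1 : T1.card = (n - l).choose 2 := by
    rw [hT1d, card_pairs_lt]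
    congr 1
    rw [Finset.card_compl, hS0,
      Finset.card_image_of_injective _ (ha.comp (Fin.castLE_injective hlm))]
    simp
  have hT2 : T2.card = (n - m).choose 2 := by
    rw [hT2d, card_pairs_lt]
    congr 1
    rw [Finset.card_compl, hS, Finset.card_image_of_injective _ ha]
    simp
  have hsub : T2 ⊆ T1 := by
    intro p
    simp only [hT1d, hT2d, mem_filter, mem_univ, true_and, Finset.mem_compl]
    rintro ⟨hlt, hp1, hp2⟩
    exact ⟨hlt, fun h => hp1 (hS0S _ h), fun h => hp2 (hS0S _ h)⟩
  have hPT : P = T1 \ T2 := by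
    ext p
    simp only [hP, hT1d, hT2d, Finset.mem_sdiff, mem_filter, mem_univ, true_and,
      Finset.mem_compl]
    tauto
  have hPcard : P.card = T1.card - T2.card := by
    rw [hPT, Finset.card_sdiff_of_subset hsub]
  have harith : (n - l).choose 2 = (n - m).choose 2 + (m - l) * (n - m) + (m - l).choose 2 := by
    have e : n - l = (n - m) + (m - l) := by omega
    rw [e, choose_add_two]
  omega


/-- For nested top-`l` and top-`m` partial rankings
`R = R(a_1,…,a_l) ⊇ R'' = R(a_1,…,a_m)` and every `σ ∈ R`, the Kendall
distances satisfy
`d(σ, Π_{R''}(σ)) = (n − m)(m − l) + C(m−l, 2) − d(A_R(σ), Π_{R''}(A_R(σ)))`.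
Here `pr` is any fixed choice function selecting the Kendall-closest element
of `R''`. -/
theorem dist_to_proj_antithetic {n l m : ℕ} (hlm : l ≤ m) (hm : m ≤ n)
    (a : Fin m → Fin n) (ha : Function.Injective a)
    (pr : Equiv.Perm (Fin n) → Equiv.Perm (Fin n))
    (hpr : ∀ τ, pr τ ∈ topkFinset hm a ∧
      ∀ ρ ∈ topkFinset hm a, kendallDist (pr τ) τ ≤ kendallDist ρ τ)
    (σ : Equiv.Perm (Fin n))
    (hσ : σ ∈ topkFinset (hlm.trans hm) (a ∘ Fin.castLE hlm)) :
    (kendallDist σ (pr σ) : ℤ) =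
      ((n : ℤ) - m) * ((m : ℤ) - l) + ((m - l).choose 2 : ℤ)
        - (kendallDist (antithetic n l σ) (pr (antithetic n l σ)) : ℤ) := by
  have e1 : kendallDist (pr σ) σ = kendallDist (proj hm a ha σ) σ :=
    le_antisymm ((hpr σ).2 _ (proj_mem hm a ha σ)) (proj_min hm a ha σ (hpr σ).1)
  have e2 : kendallDist (pr (antithetic n l σ)) (antithetic n l σ) =
      kendallDist (proj hm a ha (antithetic n l σ)) (antithetic n l σ) :=
    le_antisymm ((hpr _).2 _ (proj_mem hm a ha _)) (proj_min hm a ha _ (hpr _).1)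
  have hmain := main_nat hlm hm a ha hσ
  rw [kendall_symm σ (pr σ), kendall_symm (antithetic n l σ) (pr (antithetic n l σ)),
    e1, e2]
  zify [hlm, hm] at hmain
  linarith [hmain]
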